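/- Let θ ∈ ℝ, σ > 0, ε ∈ [0,1/3], and let Q be a probability measure on ℝ. Let φ be the characteristic function of the Efron measure P_{θ,σ,ε,Q}, and for μ ∈ ℝ and λ > 0 define Υ(t;μ,λ) = 3·e^{−iμt + λt²/2}·φ(t) − 2 for t ∈ ℝ. Then: (i) μ = θ if and only if there exists λ > 0 such that t ↦ Υ(t;μ,λ) is the characteristic function of some probability measure on ℝ; (ii) moreover, if for some μ ∈ ℝ and λ > 0 the function t ↦ Υ(t;μ,λ) is the characteristic function of a probability measure, then λ = σ². -/

import Mathlib

open MeasureTheory ProbabilityTheory Real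
open scoped ENNReal NNReal

/-- Gaussian measure on `ℝ` with mean `m` and variance `v`. -/
noncomputable def gauss (m v : ℝ) : Measure ℝ := gaussianReal m (Real.toNNReal v)

/-- Efron's Gaussian two-groups model:
`(1-ε)·N(θ,σ²) + ε·(Q ∗ N(0,σ²))`. -/
noncomputable def efron (θ σ ε : ℝ) (Q : Measure ℝ) : Measure ℝ :=
  (ENNReal.ofReal (1 - ε)) • gauss θ (σ ^ 2) +
    (ENNReal.ofReal ε) • (Measure.conv Q (gauss 0 (σ ^ 2)))

/-- The `n`-fold product (i.i.d.) measure on `ℝⁿ`. -/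
noncomputable def iid (n : ℕ) (P : Measure ℝ) : Measure (Fin n → ℝ) :=
  Measure.pi fun _ => P

/-- Characteristic function of a measure on `ℝ`: `φ(t) = ∫ e^{itx} dP(x)`. -/
noncomputable def charFun' (P : Measure ℝ) (t : ℝ) : ℂ :=
  ∫ x, Complex.exp (Complex.I * t * x) ∂P

/-- Certified adversarial component (unknown variance):
`Υ(t;μ,λ) = 3·e^{−iμt + λt²/2}·φ(t) − 2`. -/
noncomputable def UpsUnknown (φ : ℝ → ℂ) (t μ lam : ℝ) : ℂ :=
  3 * Complex.exp (-(Complex.I * (μ : ℂ) * (t : ℂ)) + ((lam : ℂ) * (t : ℂ) ^ 2 / 2))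
      * φ t - 2

instance gauss_prob (m v : ℝ) : IsProbabilityMeasure (gauss m v) := by
  unfold gauss; infer_instance

lemma norm_cexp_I_mul (t x : ℝ) : ‖Complex.exp (Complex.I * t * x)‖ = 1 := by
  rw [Complex.norm_exp]
  simp [Complex.mul_re]

lemma integrable_cexp_char (P : Measure ℝ) [IsFiniteMeasure P] (t : ℝ) :
    Integrable (fun x : ℝ => Complex.exp (Complex.I * t * x)) P := by
  refine Integrable.mono' (integrable_const (1:ℝ)) ?_ ?_
  · exact Continuous.aestronglyMeasurable (by continuity)
  · filter_upwards with x
    rw [norm_cexp_I_mul]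

lemma norm_charFun'_le (P : Measure ℝ) [IsProbabilityMeasure P] (t : ℝ) :
    ‖charFun' P t‖ ≤ 1 := by
  calc ‖charFun' P t‖ ≤ ∫ x, ‖Complex.exp (Complex.I * t * x)‖ ∂P :=
        norm_integral_le_integral_norm _
  _ = ∫ (_ : ℝ), (1:ℝ) ∂P :=
        integral_congr_ae (Filter.Eventually.of_forall fun x => norm_cexp_I_mul t x)
  _ = 1 := by simp

lemma charFun'_gauss (m v : ℝ) (hv : 0 < v) (t : ℝ) :
    charFun' (gauss m v) t =
      Complex.exp (Complex.I * t * m - v * t ^ 2 / 2) := by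
  have hv' : Real.toNNReal v ≠ 0 := by simp [Real.toNNReal_eq_zero]; linarith
  have hvne : (v:ℂ) ≠ 0 := by exact_mod_cast hv.ne'
  rw [charFun', gauss, gaussianReal_of_var_ne_zero m hv']
  have hdens : gaussianPDF m (Real.toNNReal v)
      = fun x => ((Real.toNNReal (gaussianPDFReal m (Real.toNNReal v) x) : ℝ≥0) : ℝ≥0∞) := by
    rw [gaussianPDF_def]; rfl
  rw [hdens, integral_withDensity_eq_integral_smul
    (f := fun x : ℝ => Real.toNNReal (gaussianPDFReal m (Real.toNNReal v) x))
    (Measurable.real_toNNReal (measurable_gaussianPDFReal _ _)) (fun x : ℝ => Complex.exp (Complex.I * t * x))]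
  have hpdf : ∀ x : ℝ, (Real.toNNReal (gaussianPDFReal m (Real.toNNReal v) x) : ℝ≥0)
        • Complex.exp (Complex.I * t * x)
      = ((Real.sqrt (2 * π * v) : ℝ) : ℂ)⁻¹ *
          Complex.exp ((-(1/(2*v)) : ℂ) * x ^ 2 + (Complex.I * t + m / v) * x
            + (-(m^2/(2*v)) : ℂ)) := by
    intro x
    rw [NNReal.smul_def, Real.coe_toNNReal _ (gaussianPDFReal_nonneg _ _ _)]
    rw [gaussianPDFReal, Real.coe_toNNReal _ hv.le]
    rw [Complex.real_smul]
    push_cast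
    rw [mul_assoc, ← Complex.exp_add]
    congr 2
    field_simp
    ring
  rw [MeasureTheory.integral_congr_ae (Filter.Eventually.of_forall hpdf)]
  rw [MeasureTheory.integral_const_mul]
  rw [integral_cexp_quadratic (by simp; positivity) _ _]
  have h2 : ((π : ℂ) / -(-(1/(2*v)) : ℂ)) = ((2*π*v : ℝ) : ℂ) := by
    push_cast; field_simp
  rw [h2]
  have h3 : ((2*π*v : ℝ) : ℂ) ^ (1/2 : ℂ) = ((Real.sqrt (2*π*v) : ℝ) : ℂ) := by
    have hnn : (0:ℝ) ≤ 2*π*v := by positivity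
    rw [Real.sqrt_eq_rpow]
    rw [Complex.ofReal_cpow hnn (1/2)]
    norm_num
  rw [h3, ← mul_assoc]
  have hs : ((Real.sqrt (2*π*v) : ℝ) : ℂ) ≠ 0 := by
    simp only [ne_eq, Complex.ofReal_eq_zero]
    positivity
  rw [inv_mul_cancel₀ hs, one_mul]
  congr 1
  have hI := Complex.I_sq
  field_simp
  ring_nf
  rw [Complex.I_sq]
  ring

lemma charFun'_conv (P R : Measure ℝ) [IsProbabilityMeasure P] [IsProbabilityMeasure R] (t : ℝ) :
    charFun' (Measure.conv P R) t = charFun' P t * charFun' R t := by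
  rw [charFun', Measure.conv,
    integral_map (by fun_prop) (Continuous.aestronglyMeasurable (by continuity))]
  have : ∀ p : ℝ × ℝ, Complex.exp (Complex.I * t * ((p.1 + p.2 : ℝ) : ℂ))
      = Complex.exp (Complex.I * t * p.1) * Complex.exp (Complex.I * t * p.2) := by
    intro p; rw [← Complex.exp_add]; push_cast; ring_nf
  rw [MeasureTheory.integral_congr_ae (Filter.Eventually.of_forall this)]
  exact integral_prod_mul (fun x : ℝ => Complex.exp (Complex.I * t * x))
    (fun x : ℝ => Complex.exp (Complex.I * t * x))

lemma charFun'_map_sub (Q : Measure ℝ) [IsProbabilityMeasure Q] (θ t : ℝ) :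
    charFun' (Q.map (fun x => x - θ)) t
      = Complex.exp (-(Complex.I * t * θ)) * charFun' Q t := by
  rw [charFun', integral_map (by fun_prop) (Continuous.aestronglyMeasurable (by continuity))]
  rw [charFun', ← MeasureTheory.integral_const_mul]
  refine integral_congr_ae (Filter.Eventually.of_forall fun x => ?_)
  show Complex.exp _ = Complex.exp _ * Complex.exp _
  rw [← Complex.exp_add]; push_cast; ring_nf

lemma charFun'_dirac_zero (t : ℝ) : charFun' (Measure.dirac (0:ℝ)) t = 1 := by
  rw [charFun', integral_dirac]
  simp

lemma charFun'_mix (a b : ℝ) (ha : 0 ≤ a) (hb : 0 ≤ b) (P₁ P₂ : Measure ℝ)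
    [IsFiniteMeasure P₁] [IsFiniteMeasure P₂] (t : ℝ) :
    charFun' (ENNReal.ofReal a • P₁ + ENNReal.ofReal b • P₂) t
      = a * charFun' P₁ t + b * charFun' P₂ t := by
  rw [charFun',
    integral_add_measure
      ((integrable_cexp_char P₁ t).smul_measure ENNReal.ofReal_ne_top)
      ((integrable_cexp_char P₂ t).smul_measure ENNReal.ofReal_ne_top),
    integral_smul_measure, integral_smul_measure,
    ENNReal.toReal_ofReal ha, ENNReal.toReal_ofReal hb]
  rw [charFun', charFun']
  simp [Complex.real_smul]



lemma charFun'_efron (θ σ ε : ℝ) (hσ : 0 < σ) (hε0 : 0 ≤ ε) (hε1 : ε ≤ 1)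
    (Q : Measure ℝ) [IsProbabilityMeasure Q] (t : ℝ) :
    charFun' (efron θ σ ε Q) t
      = Complex.exp (-(((σ^2 : ℝ)) : ℂ) * (t:ℂ) ^ 2 / 2) *
          (((1 - ε : ℝ) : ℂ) * Complex.exp (Complex.I * t * θ) + (ε : ℂ) * charFun' Q t) := by
  have hs : (0:ℝ) < σ ^ 2 := by positivity
  rw [efron, charFun'_mix (1-ε) ε (by linarith) hε0, charFun'_gauss θ _ hs t,
    charFun'_conv, charFun'_gauss 0 _ hs t]
  have e1 : Complex.exp (Complex.I * t * θ - ((σ^2:ℝ):ℂ) * (t:ℂ)^2/2)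
      = Complex.exp (Complex.I * t * θ) * Complex.exp (-(((σ^2:ℝ)):ℂ) * (t:ℂ)^2/2) := by
    rw [← Complex.exp_add]; congr 1; ring
  have e2 : Complex.exp (Complex.I * t * (0:ℝ) - ((σ^2:ℝ):ℂ) * (t:ℂ)^2/2)
      = Complex.exp (-(((σ^2:ℝ)):ℂ) * (t:ℂ)^2/2) := by
    congr 1; push_cast; ring
  rw [e1, e2]
  push_cast
  ring

lemma norm_cexp_aux (μ r t : ℝ) :
    ‖Complex.exp (-(Complex.I * μ * t) + (r:ℂ) * (t:ℂ)^2/2)‖ = Real.exp (r * t^2/2) := by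
  have h : -(Complex.I * (μ:ℂ) * t) + (r:ℂ) * (t:ℂ)^2/2
      = Complex.I * ((-μ : ℝ):ℂ) * t + ((r * t^2/2 : ℝ):ℂ) := by push_cast; ring
  rw [h, Complex.exp_add, norm_mul, norm_cexp_I_mul, one_mul,
    Complex.norm_exp, Complex.ofReal_re]


/-- Lemma 2.2: in the unknown-variance setting with `ε ∈ [0,1/3]`, a candidate `μ` equals
the true `θ` iff there exists `λ > 0` such that `t ↦ Υ(t;μ,λ)` is a genuine characteristic
function; moreover any such `λ` must equal `σ²`. -/
theorem true_candidate_unknown_variance (θ σ ε : ℝ) (hσ : 0 < σ)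
    (hε : ε ∈ Set.Icc (0:ℝ) (1/3)) (Q : Measure ℝ) (hQ : IsProbabilityMeasure Q) :
    (∀ μ : ℝ,
      (μ = θ ↔
        ∃ lam : ℝ, 0 < lam ∧
          ∃ ν : Measure ℝ, IsProbabilityMeasure ν ∧
            ∀ t : ℝ, charFun' ν t = UpsUnknown (charFun' (efron θ σ ε Q)) t μ lam)) ∧
    (∀ μ lam : ℝ, 0 < lam →
      (∃ ν : Measure ℝ, IsProbabilityMeasure ν ∧
          ∀ t : ℝ, charFun' ν t = UpsUnknown (charFun' (efron θ σ ε Q)) t μ lam) →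
      lam = σ ^ 2) := by
  obtain ⟨hε0, hε13⟩ := hε
  have hε1 : ε ≤ 1 := by linarith
  set φQ : ℝ → ℂ := charFun' Q with hφQdef
  set g : ℝ → ℂ := fun t =>
    ((1 - ε : ℝ) : ℂ) * Complex.exp (Complex.I * t * θ) + (ε : ℂ) * φQ t with hgdef
  have hφ : ∀ t : ℝ, charFun' (efron θ σ ε Q) t
      = Complex.exp (-(((σ^2 : ℝ)) : ℂ) * (t:ℂ) ^ 2 / 2) * g t :=
    fun t => charFun'_efron θ σ ε hσ hε0 hε1 Q t
  have hQn : ∀ t : ℝ, ‖φQ t‖ ≤ 1 := fun t => norm_charFun'_le Q t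
  have hgu : ∀ t : ℝ, ‖g t‖ ≤ 1 := by
    intro t
    calc ‖g t‖ ≤ ‖((1-ε:ℝ):ℂ) * Complex.exp (Complex.I * t * θ)‖ + ‖(ε:ℂ) * φQ t‖ :=
          norm_add_le _ _
    _ ≤ (1-ε) * 1 + ε * 1 := by
        rw [norm_mul, norm_mul, norm_cexp_I_mul, Complex.norm_real, Complex.norm_real,
          Real.norm_eq_abs, Real.norm_eq_abs, abs_of_nonneg (by linarith : (0:ℝ) ≤ 1-ε),
          abs_of_nonneg hε0]
        gcongr
        exact hQn t
    _ = 1 := by ring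
  have hgl : ∀ t : ℝ, (1:ℝ)/3 ≤ ‖g t‖ := by
    intro t
    have h1 : ‖((1-ε:ℝ):ℂ) * Complex.exp (Complex.I * t * θ)‖ = 1 - ε := by
      rw [norm_mul, norm_cexp_I_mul, Complex.norm_real, Real.norm_eq_abs,
        abs_of_nonneg (by linarith : (0:ℝ) ≤ 1-ε), mul_one]
    have h2 : ‖(ε:ℂ) * φQ t‖ ≤ ε := by
      rw [norm_mul, Complex.norm_real, Real.norm_eq_abs, abs_of_nonneg hε0]
      calc ε * ‖φQ t‖ ≤ ε * 1 := by gcongr; exact hQn t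
      _ = ε := mul_one ε
    have h3 := norm_sub_norm_le (((1-ε:ℝ):ℂ) * Complex.exp (Complex.I * t * θ))
      (-((ε:ℂ) * φQ t))
    rw [norm_neg, sub_neg_eq_add] at h3
    have h4 : (1-ε) - ε ≤ ‖g t‖ := by
      rw [hgdef]; simp only
      linarith [h1, h2, h3]
    linarith
  -- the key converse step
  have hconv : ∀ μ lam : ℝ, 0 < lam →
      (∃ ν : Measure ℝ, IsProbabilityMeasure ν ∧
          ∀ t : ℝ, charFun' ν t = UpsUnknown (charFun' (efron θ σ ε Q)) t μ lam) →
      lam = σ ^ 2 ∧ μ = θ := by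
    intro μ lam hlam ⟨ν, hν, hU0⟩
    have hb : ∀ t : ℝ, ‖charFun' ν t‖ ≤ 1 := fun t => norm_charFun'_le ν t
    set r : ℝ := lam - σ ^ 2 with hrdef
    have hU : ∀ t : ℝ, charFun' ν t
        = 3 * Complex.exp (-(Complex.I * μ * t) + (r:ℂ) * (t:ℂ)^2/2) * g t - 2 := by
      intro t
      rw [hU0 t, UpsUnknown, hφ t]
      have hcomb : Complex.exp (-(Complex.I * (μ:ℂ) * t) + ((lam:ℂ) * (t:ℂ)^2/2))
          * Complex.exp (-(((σ^2:ℝ)):ℂ) * (t:ℂ)^2/2)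
          = Complex.exp (-(Complex.I * μ * t) + (r:ℂ) * (t:ℂ)^2/2) := by
        rw [← Complex.exp_add]; congr 1; rw [hrdef]; push_cast; ring
      linear_combination (3 * g t) * hcomb
    have hnorm3 : ∀ t : ℝ,
        ‖3 * Complex.exp (-(Complex.I * μ * t) + (r:ℂ) * (t:ℂ)^2/2) * g t‖
          = 3 * Real.exp (r * t^2/2) * ‖g t‖ := by
      intro t
      rw [norm_mul, norm_mul, norm_cexp_aux]
      norm_num
    have hr0 : r = 0 := by
      by_contra hr
      rcases lt_or_gt_of_ne hr with hneg | hpos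
      · -- r < 0 : take t with r t²/2 = -3
        set t := Real.sqrt (6 / (-r)) with htdef
        have ht2 : t^2 = 6 / (-r) := Real.sq_sqrt (div_pos (by norm_num) (by linarith)).le
        have hrt : r * t^2 / 2 = -3 := by
          rw [ht2]; field_simp; ring
        have hexp : Real.exp (r * t^2/2) ≤ 1/4 := by
          rw [hrt]
          rw [Real.exp_neg]
          have h4 : (4:ℝ) ≤ Real.exp 3 := by
            have := Real.add_one_le_exp (3:ℝ); linarith
          have h5 : (Real.exp 3)⁻¹ ≤ (4:ℝ)⁻¹ := by
            apply inv_anti₀ (by norm_num) h4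
          linarith
        have hX : ‖3 * Complex.exp (-(Complex.I * μ * t) + (r:ℂ) * (t:ℂ)^2/2) * g t‖ ≤ 3/4 := by
          rw [hnorm3 t]
          nlinarith [hexp, hgu t, norm_nonneg (g t), (Real.exp_pos (r * t^2/2)).le]
        have h5 := hb t
        rw [hU t] at h5
        have h6 := norm_sub_norm_le (2:ℂ)
          (3 * Complex.exp (-(Complex.I * μ * t) + (r:ℂ) * (t:ℂ)^2/2) * g t)
        rw [norm_sub_rev] at h6
        have h7 : ‖(2:ℂ)‖ = 2 := by norm_num
        linarith
      · -- r > 0 : take t with r t²/2 = 3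
        set t := Real.sqrt (6 / r) with htdef
        have ht2 : t^2 = 6 / r := Real.sq_sqrt (div_pos (by norm_num) (by linarith)).le
        have hrt : r * t^2 / 2 = 3 := by rw [ht2]; field_simp; ring
        have hexp : (4:ℝ) ≤ Real.exp (r * t^2/2) := by
          rw [hrt]; have := Real.add_one_le_exp (3:ℝ); linarith
        have hX : (4:ℝ) ≤ ‖3 * Complex.exp (-(Complex.I * μ * t) + (r:ℂ) * (t:ℂ)^2/2) * g t‖ := by
          rw [hnorm3 t]
          nlinarith [hexp, hgl t, norm_nonneg (g t), (Real.exp_pos (r * t^2/2)).le]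
        have h5 := hb t
        rw [hU t] at h5
        have h6 := norm_sub_norm_le
          (3 * Complex.exp (-(Complex.I * μ * t) + (r:ℂ) * (t:ℂ)^2/2) * g t) (2:ℂ)
        have h7 : ‖(2:ℂ)‖ = 2 := by norm_num
        linarith
    have hlamσ : lam = σ ^ 2 := by rw [hrdef] at hr0; linarith
    refine ⟨hlamσ, ?_⟩
    -- now show μ = θ
    by_contra hne
    have hθμ : θ - μ ≠ 0 := sub_ne_zero.mpr (Ne.symm hne)
    set t₀ : ℝ := π / (θ - μ) with ht₀def
    have hprod : (θ - μ) * t₀ = π := by rw [ht₀def]; field_simp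
    have hU' : charFun' ν t₀
        = 3 * Complex.exp (-(Complex.I * μ * t₀)) * g t₀ - 2 := by
      rw [hU t₀, hr0]
      norm_num
    have hef : Complex.exp (-(Complex.I * μ * t₀)) * Complex.exp (Complex.I * t₀ * θ)
        = -1 := by
      rw [← Complex.exp_add,
        show -(Complex.I * (μ:ℂ) * t₀) + Complex.I * t₀ * θ
          = (((θ - μ) * t₀ : ℝ) : ℂ) * Complex.I by push_cast; ring,
        hprod, Complex.exp_pi_mul_I]
    have hsplit : charFun' ν t₀
        = 3 * (ε:ℂ) * Complex.exp (-(Complex.I * μ * t₀)) * φQ t₀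
          - ((3 * (1-ε) + 2 : ℝ) : ℂ) := by
      rw [hU', hgdef]
      simp only
      push_cast
      linear_combination (3 * (1 - (ε:ℂ))) * hef
    have hn1 : ‖((3 * (1-ε) + 2 : ℝ) : ℂ)‖ = 3 * (1-ε) + 2 := by
      rw [Complex.norm_real, Real.norm_eq_abs, abs_of_nonneg (by linarith)]
    have hn2 : ‖3 * (ε:ℂ) * Complex.exp (-(Complex.I * μ * t₀)) * φQ t₀‖ ≤ 3 * ε := by
      have he1 : ‖Complex.exp (-(Complex.I * μ * t₀))‖ = 1 := by
        rw [show -(Complex.I * (μ:ℂ) * t₀) = Complex.I * ((-μ:ℝ):ℂ) * t₀ by push_cast; ring,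
          norm_cexp_I_mul]
      rw [norm_mul, norm_mul, norm_mul, he1, mul_one, Complex.norm_real, Real.norm_eq_abs,
        abs_of_nonneg hε0]
      have h3 : ‖(3:ℂ)‖ = 3 := by norm_num
      rw [h3]
      calc 3 * ε * ‖φQ t₀‖ ≤ 3 * ε * 1 := by gcongr; exact hQn t₀
      _ = 3 * ε := mul_one _
    have h6 := norm_sub_norm_le (((3 * (1-ε) + 2 : ℝ) : ℂ))
      (3 * (ε:ℂ) * Complex.exp (-(Complex.I * μ * t₀)) * φQ t₀)
    rw [norm_sub_rev] at h6
    rw [← hsplit] at h6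
    have h5 := hb t₀
    rw [hn1] at h6
    linarith
  constructor
  · intro μ
    constructor
    · rintro rfl
      refine ⟨σ ^ 2, by positivity, ?_⟩
      haveI : IsProbabilityMeasure (Q.map (fun x => x - μ)) :=
        Measure.isProbabilityMeasure_map (by fun_prop)
      refine ⟨ENNReal.ofReal (1 - 3*ε) • Measure.dirac (0:ℝ)
          + ENNReal.ofReal (3*ε) • Q.map (fun x => x - μ), ?_, ?_⟩
      · constructor
        simp only [Measure.add_apply, Measure.smul_apply, smul_eq_mul, measure_univ, mul_one]
        rw [← ENNReal.ofReal_add (by linarith) (by linarith)]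
        norm_num
      · intro t
        rw [charFun'_mix (1 - 3*ε) (3*ε) (by linarith) (by linarith),
          charFun'_dirac_zero, charFun'_map_sub, UpsUnknown, hφ t, hgdef]
        simp only
        have hee : Complex.exp (-(Complex.I * (μ:ℂ) * t) + ((σ^2 : ℝ):ℂ) * (t:ℂ)^2/2)
            * Complex.exp (-(((σ^2:ℝ)):ℂ) * (t:ℂ)^2/2)
            = Complex.exp (-(Complex.I * (t:ℂ) * μ)) := by
          rw [← Complex.exp_add]; congr 1; ring
        have hef : Complex.exp (-(Complex.I * (t:ℂ) * μ)) * Complex.exp (Complex.I * t * μ)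
            = 1 := by
          rw [← Complex.exp_add,
            show -(Complex.I * (t:ℂ) * μ) + Complex.I * t * μ = 0 by ring, Complex.exp_zero]
        push_cast
        push_cast at hee
        linear_combination (-(3 * ((1 - (ε:ℂ)) * Complex.exp (Complex.I * t * μ)
            + (ε:ℂ) * φQ t))) * hee + (-(3 * (1 - (ε:ℂ)))) * hef
    · rintro ⟨lam, hlam, hex⟩
      exact (hconv μ lam hlam hex).2
  · intro μ lam hlam hex
    exact (hconv μ lam hlam hex).1
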